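/- For any connected graph G with n vertices, the probabilistic zero forcing throttling number satisfies th(G) ≥ log₂ log₂ (2n), where th(G) = min over nonempty S ⊆ V(G) of (|S| + ept(G, S)). -/

import Mathlib

open Finset

/-- Probability that white vertex `v` is forced blue in one step of probabilistic
zero forcing from blue set `B`: each blue neighbor `u` of `v` independently forces `v`
with probability `|N[u] ∩ B| / deg u`. -/
noncomputable def forceProb {V : Type*} [Fintype V] [DecidableEq V]
    (G : SimpleGraph V) [DecidableRel G.Adj] (B : Finset V) (v : V) : ℝ :=
  1 - ∏ u ∈ B.filter (fun u => G.Adj u v),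
      (1 - (((G.neighborFinset u ∩ B).card + 1 : ℝ) / (G.degree u)))

/-- Probability that the set of newly forced vertices in one step of probabilistic zero
forcing from blue set `B` is exactly `T` (white vertices turn blue independently). -/
noncomputable def stepMass {V : Type*} [Fintype V] [DecidableEq V]
    (G : SimpleGraph V) [DecidableRel G.Adj] (B T : Finset V) : ℝ :=
  if T ⊆ Bᶜ then
    ∏ v ∈ Bᶜ, (if v ∈ T then forceProb G B v else 1 - forceProb G B v)
  else 0

/-- `probAllBlue G t B` is the probability that, starting from blue set `B`, all
vertices are blue after `t` steps of probabilistic zero forcing. -/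
noncomputable def probAllBlue {V : Type*} [Fintype V] [DecidableEq V]
    (G : SimpleGraph V) [DecidableRel G.Adj] : ℕ → Finset V → ℝ
  | 0, B => if B = Finset.univ then 1 else 0
  | t + 1, B => ∑ T ∈ Bᶜ.powerset, stepMass G B T * probAllBlue G t (B ∪ T)

/-- Expected propagation time of probabilistic zero forcing from initial blue set `S`:
`E[τ] = ∑_{t ≥ 0} P(τ > t) = ∑_{t ≥ 0} (1 - P^{(t)}(G,S))`. -/
noncomputable def ept {V : Type*} [Fintype V] [DecidableEq V]
    (G : SimpleGraph V) [DecidableRel G.Adj] (S : Finset V) : ℝ :=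
  ∑' t : ℕ, (1 - probAllBlue G t S)

set_option linter.unusedSectionVars false

namespace PZF

variable {V : Type*} [Fintype V] [DecidableEq V]
  (G : SimpleGraph V) [DecidableRel G.Adj]

/-- the success probability of a single blue vertex `u` on `v`. -/
noncomputable def pr (B : Finset V) (u : V) : ℝ :=
  ((G.neighborFinset u ∩ B).card + 1 : ℝ) / (G.degree u)

variable {G}

lemma pr_nonneg {B : Finset V} {u : V} : 0 ≤ pr G B u := by
  apply div_nonneg <;> positivity

lemma pr_pos {B : Finset V} {u v : V} (h : G.Adj u v) : 0 < pr G B u := by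
  have hd : 0 < G.degree u := by
    rw [← SimpleGraph.card_neighborFinset_eq_degree]
    exact card_pos.2 ⟨v, (SimpleGraph.mem_neighborFinset G u v).2 h⟩
  apply div_pos _ (by exact_mod_cast hd)
  positivity

lemma pr_le_one {B : Finset V} {u v : V} (h : G.Adj u v) (hv : v ∉ B) :
    pr G B u ≤ 1 := by
  have hd : 0 < G.degree u := by
    rw [← SimpleGraph.card_neighborFinset_eq_degree]
    exact card_pos.2 ⟨v, (SimpleGraph.mem_neighborFinset G u v).2 h⟩
  rw [pr, div_le_one (by exact_mod_cast hd)]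
  have hsub : insert v (G.neighborFinset u ∩ B) ⊆ G.neighborFinset u := by
    intro x hx
    rcases mem_insert.1 hx with rfl | hx
    · exact (SimpleGraph.mem_neighborFinset G u x).2 h
    · exact (mem_inter.1 hx).1
  have hvni : v ∉ G.neighborFinset u ∩ B := fun hx => hv (mem_inter.1 hx).2
  have := card_le_card hsub
  rw [card_insert_of_notMem hvni] at this
  rw [← SimpleGraph.card_neighborFinset_eq_degree]
  exact_mod_cast this

lemma forceProb_eq (B : Finset V) (v : V) :
    forceProb G B v = 1 - ∏ u ∈ B.filter (fun u => G.Adj u v), (1 - pr G B u) := rfl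

lemma forceProb_nonneg {B : Finset V} {v : V} (hv : v ∉ B) :
    0 ≤ forceProb G B v := by
  rw [forceProb_eq, sub_nonneg]
  apply prod_le_one
  · intro u hu
    rcases mem_filter.1 hu with ⟨-, hadj⟩
    linarith [pr_le_one hadj hv]
  · intro u hu
    linarith [pr_nonneg (G := G) (B := B) (u := u)]

lemma forceProb_le_one {B : Finset V} {v : V} (hv : v ∉ B) :
    forceProb G B v ≤ 1 := by
  rw [forceProb_eq]
  have : (0:ℝ) ≤ ∏ u ∈ B.filter (fun u => G.Adj u v), (1 - pr G B u) := by
    apply prod_nonneg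
    intro u hu
    rcases mem_filter.1 hu with ⟨-, hadj⟩
    linarith [pr_le_one hadj hv]
  linarith

lemma stepMass_nonneg (B T : Finset V) : 0 ≤ stepMass G B T := by
  rw [stepMass]
  split
  · apply prod_nonneg
    intro v hv
    have hv' : v ∉ B := (Finset.mem_compl).1 hv
    split
    · exact forceProb_nonneg hv'
    · linarith [forceProb_le_one (G := G) hv']
  · exact le_refl 0

lemma insert_sdiff_insert_eq {a : V} {W T : Finset V} (ha : a ∉ W) :
    insert a W \ insert a T = W \ T := by
  ext x; simp only [mem_sdiff, mem_insert]
  constructor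
  · rintro ⟨h1 | h1, h2⟩
    · exact absurd (Or.inl h1) h2
    · push_neg at h2; exact ⟨h1, h2.2⟩
  · rintro ⟨h1, h2⟩
    refine ⟨Or.inr h1, ?_⟩
    push_neg
    exact ⟨fun h => ha (h ▸ h1), h2⟩

lemma stepMass_eq {B T : Finset V} (hT : T ⊆ Bᶜ) :
    stepMass G B T =
      (∏ v ∈ T, forceProb G B v) * ∏ v ∈ Bᶜ \ T, (1 - forceProb G B v) := by
  rw [stepMass, if_pos hT]
  rw [← union_sdiff_of_subset hT, prod_union (disjoint_sdiff)]
  rw [union_sdiff_of_subset hT]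
  congr 1
  · exact prod_congr rfl fun v hv => if_pos hv
  · exact prod_congr rfl fun v hv => if_neg (mem_sdiff.1 hv).2

lemma sum_stepMass (B : Finset V) :
    ∑ T ∈ Bᶜ.powerset, stepMass G B T = 1 := by
  rw [Finset.sum_congr rfl fun T hT => stepMass_eq (mem_powerset.1 hT)]
  rw [← Finset.prod_add]
  simp

/-- generic Bernoulli expectation of the cardinality. -/
lemma bern_card (W : Finset V) (q : V → ℝ) :
    ∑ T ∈ W.powerset, ((∏ v ∈ T, q v) * ∏ v ∈ W \ T, (1 - q v)) * T.card
      = ∑ v ∈ W, q v := by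
  classical
  induction W using Finset.induction_on with
  | empty => simp
  | @insert a W ha ih =>
    rw [Finset.sum_powerset_insert ha, Finset.sum_insert ha]
    have hmass : ∑ T ∈ W.powerset, (∏ v ∈ T, q v) * ∏ v ∈ W \ T, (1 - q v) = 1 := by
      rw [← Finset.prod_add]; simp
    have h1 : ∑ T ∈ W.powerset,
        ((∏ v ∈ T, q v) * ∏ v ∈ insert a W \ T, (1 - q v)) * T.card
        = (1 - q a) * ∑ T ∈ W.powerset,
            ((∏ v ∈ T, q v) * ∏ v ∈ W \ T, (1 - q v)) * T.card := by
      rw [Finset.mul_sum]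
      refine Finset.sum_congr rfl fun T hT => ?_
      have haT : a ∉ T := fun h => ha (mem_powerset.1 hT h)
      rw [insert_sdiff_of_notMem _ haT, prod_insert (fun h => ha (mem_sdiff.1 h).1)]
      ring
    have h2 : ∑ T ∈ W.powerset,
        ((∏ v ∈ insert a T, q v) * ∏ v ∈ insert a W \ insert a T, (1 - q v)) *
          (insert a T).card
        = q a * ∑ T ∈ W.powerset,
            ((∏ v ∈ T, q v) * ∏ v ∈ W \ T, (1 - q v)) * (T.card + 1) := by
      rw [Finset.mul_sum]
      refine Finset.sum_congr rfl fun T hT => ?_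
      have haT : a ∉ T := fun h => ha (mem_powerset.1 hT h)
      rw [prod_insert haT, card_insert_of_notMem haT,
        insert_sdiff_insert_eq ha]
      push_cast
      ring
    rw [h1, h2, ih]
    have h3 : ∑ T ∈ W.powerset,
        ((∏ v ∈ T, q v) * ∏ v ∈ W \ T, (1 - q v)) * ((T.card : ℝ) + 1)
        = (∑ v ∈ W, q v) + 1 := by
      have := Finset.sum_congr (rfl : W.powerset = W.powerset)
        (fun T (hT : T ∈ W.powerset) =>
          (mul_add ((∏ v ∈ T, q v) * ∏ v ∈ W \ T, (1 - q v)) (T.card : ℝ) 1))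
      rw [this, Finset.sum_add_distrib, ih]
      simp only [mul_one, hmass]
    rw [h3]
    ring

lemma sum_stepMass_card (B : Finset V) :
    ∑ T ∈ Bᶜ.powerset, stepMass G B T * T.card = ∑ v ∈ Bᶜ, forceProb G B v := by
  rw [Finset.sum_congr rfl fun T hT => by
    rw [stepMass_eq (mem_powerset.1 hT)]]
  exact bern_card Bᶜ (forceProb G B)

lemma pab_nonneg : ∀ (t : ℕ) (B : Finset V), 0 ≤ probAllBlue G t B
  | 0, B => by rw [probAllBlue]; split <;> norm_num
  | (t+1), B => by
      rw [probAllBlue]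
      exact Finset.sum_nonneg fun T _ =>
        mul_nonneg (stepMass_nonneg B T) (pab_nonneg t (B ∪ T))

lemma pab_le_one : ∀ (t : ℕ) (B : Finset V), probAllBlue G t B ≤ 1
  | 0, B => by rw [probAllBlue]; split <;> norm_num
  | (t+1), B => by
      rw [probAllBlue]
      calc ∑ T ∈ Bᶜ.powerset, stepMass G B T * probAllBlue G t (B ∪ T)
          ≤ ∑ T ∈ Bᶜ.powerset, stepMass G B T * 1 :=
            Finset.sum_le_sum fun T _ =>
              mul_le_mul_of_nonneg_left (pab_le_one t (B ∪ T)) (stepMass_nonneg B T)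
        _ = 1 := by simp [sum_stepMass]

lemma stepMass_univ_empty : stepMass G (univ : Finset V) ∅ = 1 := by
  rw [stepMass, if_pos (empty_subset _)]
  simp

lemma pab_univ : ∀ t : ℕ, probAllBlue G t (univ : Finset V) = 1
  | 0 => by rw [probAllBlue]; simp
  | (t+1) => by
      rw [probAllBlue]
      have : (univ : Finset V)ᶜ = ∅ := by simp
      rw [this, Finset.powerset_empty, Finset.sum_singleton, stepMass_univ_empty,
        Finset.union_empty, pab_univ t, one_mul]

lemma pab_mono_succ : ∀ (t : ℕ) (B : Finset V),
    probAllBlue G t B ≤ probAllBlue G (t+1) B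
  | 0, B => by
      by_cases h : B = univ
      · subst h; rw [pab_univ, pab_univ]
      · rw [probAllBlue, if_neg h]; exact pab_nonneg 1 B
  | (t+1), B => by
      rw [probAllBlue, probAllBlue]
      exact Finset.sum_le_sum fun T _ =>
        mul_le_mul_of_nonneg_left (pab_mono_succ t (B ∪ T)) (stepMass_nonneg B T)

lemma pab_mono {s t : ℕ} (h : s ≤ t) (B : Finset V) :
    probAllBlue G s B ≤ probAllBlue G t B := by
  induction t with
  | zero => exact Nat.le_zero.1 h ▸ le_refl _
  | succ t ih =>
    rcases Nat.lt_or_ge s (t+1) with h' | h'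
    · exact (ih (Nat.lt_succ_iff.1 h')).trans (pab_mono_succ t B)
    · have : s = t + 1 := le_antisymm h h'
      subst this; exact le_refl _

/-- the potential function `log₂ log₂ (2|B|)`. -/
noncomputable def fB (B : Finset V) : ℝ := Real.logb 2 (Real.logb 2 (2 * B.card))

lemma fB_nonneg (B : Finset V) : 0 ≤ fB B := by
  rcases Nat.eq_zero_or_pos B.card with h | h
  · simp [fB, h]
  · have h2 : (2:ℝ) ≤ 2 * B.card := by
      have : (1:ℝ) ≤ B.card := by exact_mod_cast h
      linarith
    have hl : 1 ≤ Real.logb 2 (2 * B.card) := by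
      calc (1:ℝ) = Real.logb 2 2 := (Real.logb_self_eq_one one_lt_two).symm
        _ ≤ _ := (Real.logb_le_logb one_lt_two two_pos (by linarith)).2 h2
    exact Real.logb_nonneg one_lt_two hl

/-- finite Jensen inequality for `logb 2`. -/
lemma jensen_logb {ι : Type*} (t : Finset ι) (w x : ι → ℝ)
    (hw : ∀ i ∈ t, 0 ≤ w i) (hw1 : ∑ i ∈ t, w i = 1)
    (hx : ∀ i ∈ t, 0 < x i) :
    ∑ i ∈ t, w i * Real.logb 2 (x i) ≤ Real.logb 2 (∑ i ∈ t, w i * x i) := by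
  have hcc : ConcaveOn ℝ (Set.Ioi 0) Real.log := strictConcaveOn_log_Ioi.concaveOn
  have h := hcc.le_map_sum hw hw1 (fun i hi => hx i hi)
  simp only [smul_eq_mul] at h
  have hlog2 : (0:ℝ) < Real.log 2 := Real.log_pos one_lt_two
  simp only [Real.logb]
  have heq : ∑ i ∈ t, w i * (Real.log (x i) / Real.log 2)
      = (∑ i ∈ t, w i * Real.log (x i)) / Real.log 2 := by
    rw [Finset.sum_div]
    exact Finset.sum_congr rfl fun i _ => (mul_div_assoc _ _ _).symm
  rw [heq]
  exact (div_le_div_iff_of_pos_right hlog2).2 h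

/-- union bound: `1 - ∏ (1 - pᵢ) ≤ ∑ pᵢ`. -/
lemma union_bound {ι : Type*} [DecidableEq ι] (s : Finset ι) (p : ι → ℝ)
    (h0 : ∀ i ∈ s, 0 ≤ p i) (h1 : ∀ i ∈ s, p i ≤ 1) :
    1 - ∏ i ∈ s, (1 - p i) ≤ ∑ i ∈ s, p i := by
  induction s using Finset.induction_on with
  | empty => simp
  | @insert a s ha ih =>
    rw [prod_insert ha, sum_insert ha]
    have hprod : ∏ i ∈ s, (1 - p i) ≤ 1 :=
      prod_le_one (fun i hi => by linarith [h1 i (mem_insert_of_mem hi)])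
        (fun i hi => by linarith [h0 i (mem_insert_of_mem hi)])
    have ih' := ih (fun i hi => h0 i (mem_insert_of_mem hi))
      (fun i hi => h1 i (mem_insert_of_mem hi))
    have hpa0 := h0 a (mem_insert_self a s)
    nlinarith [hpa0, hprod]

lemma sum_forceProb_le {B : Finset V} (hB : B.Nonempty) :
    ∑ v ∈ Bᶜ, forceProb G B v ≤ (B.card : ℝ) ^ 2 := by
  have step1 : ∀ v ∈ Bᶜ, forceProb G B v ≤
      ∑ u ∈ B.filter (fun u => G.Adj u v), pr G B u := by
    intro v hv
    have hv' : v ∉ B := mem_compl.1 hv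
    rw [forceProb_eq]
    exact union_bound _ _ (fun u _ => pr_nonneg)
      (fun u hu => pr_le_one (mem_filter.1 hu).2 hv')
  calc ∑ v ∈ Bᶜ, forceProb G B v
      ≤ ∑ v ∈ Bᶜ, ∑ u ∈ B.filter (fun u => G.Adj u v), pr G B u :=
        Finset.sum_le_sum step1
    _ = ∑ v ∈ Bᶜ, ∑ u ∈ B, if G.Adj u v then pr G B u else 0 :=
        Finset.sum_congr rfl fun v _ => (Finset.sum_filter _ _)
    _ = ∑ u ∈ B, ∑ v ∈ Bᶜ, if G.Adj u v then pr G B u else 0 := Finset.sum_comm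
    _ ≤ ∑ u ∈ B, (B.card : ℝ) := by
        apply Finset.sum_le_sum
        intro u hu
        rw [← Finset.sum_filter]
        rw [Finset.sum_const, nsmul_eq_mul]
        rcases Finset.eq_empty_or_nonempty (Bᶜ.filter (fun v => G.Adj u v)) with he | ⟨v, hvmem⟩
        · rw [he]
          simp only [card_empty, Nat.cast_zero, zero_mul]
          positivity
        · have hadj : G.Adj u v := (mem_filter.1 hvmem).2
          have hd : 0 < G.degree u := by
            rw [← SimpleGraph.card_neighborFinset_eq_degree]
            exact card_pos.2 ⟨v, (SimpleGraph.mem_neighborFinset G u v).2 hadj⟩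
          have hcount : ((Bᶜ.filter (fun v => G.Adj u v)).card : ℝ) ≤ (G.degree u : ℝ) := by
            rw [← SimpleGraph.card_neighborFinset_eq_degree]
            exact_mod_cast card_le_card (fun x hx =>
              (SimpleGraph.mem_neighborFinset G u x).2 (mem_filter.1 hx).2)
          have hb : ((G.neighborFinset u ∩ B).card : ℝ) + 1 ≤ (B.card : ℝ) := by
            have hsub : G.neighborFinset u ∩ B ⊆ B.erase u := by
              intro x hx
              rcases mem_inter.1 hx with ⟨hx1, hx2⟩
              refine mem_erase.2 ⟨?_, hx2⟩
              rintro rfl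
              exact G.irrefl ((SimpleGraph.mem_neighborFinset _ _ _).1 hx1)
            have := card_le_card hsub
            rw [card_erase_of_mem hu] at this
            have hcard : 1 ≤ B.card := card_pos.2 ⟨u, hu⟩
            have : (G.neighborFinset u ∩ B).card + 1 ≤ B.card := by omega
            exact_mod_cast this
          have hpr0 : 0 ≤ pr G B u := pr_nonneg
          calc ((Bᶜ.filter (fun v => G.Adj u v)).card : ℝ) * pr G B u
              ≤ (G.degree u : ℝ) * pr G B u :=
                mul_le_mul_of_nonneg_right hcount hpr0
            _ = ((G.neighborFinset u ∩ B).card : ℝ) + 1 := by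
                rw [pr, mul_div_cancel₀]
                exact_mod_cast hd.ne'
            _ ≤ (B.card : ℝ) := hb
    _ = (B.card : ℝ) ^ 2 := by rw [Finset.sum_const, nsmul_eq_mul]; ring

lemma key_step {B : Finset V} (hB : B.Nonempty) :
    ∑ T ∈ Bᶜ.powerset, stepMass G B T * fB (B ∪ T) ≤ fB B + 1 := by
  set k : ℝ := (B.card : ℝ) with hk
  have hk1 : (1:ℝ) ≤ k := by
    have h1 : 1 ≤ B.card := card_pos.2 hB
    rw [hk]; exact_mod_cast h1
  have hw : ∀ T ∈ Bᶜ.powerset, 0 ≤ stepMass G B T := fun T _ => stepMass_nonneg B T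
  have hw1 : ∑ T ∈ Bᶜ.powerset, stepMass G B T = 1 := sum_stepMass B
  -- the values logb 2 (2 * |B ∪ T|) are at least 1
  have hx1 : ∀ T ∈ Bᶜ.powerset, (1:ℝ) ≤ Real.logb 2 (2 * ((B ∪ T).card : ℝ)) := by
    intro T _
    have h1 : (1:ℝ) ≤ ((B ∪ T).card : ℝ) := by
      have hpos : 0 < (B ∪ T).card := card_pos.2 (hB.mono (subset_union_left : B ⊆ B ∪ T))
      exact_mod_cast hpos
    calc (1:ℝ) = Real.logb 2 2 := (Real.logb_self_eq_one one_lt_two).symm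
      _ ≤ _ := (Real.logb_le_logb one_lt_two two_pos (by linarith)).2 (by linarith)
  -- inner Jensen
  have jens1 : ∑ T ∈ Bᶜ.powerset, stepMass G B T * fB (B ∪ T) ≤
      Real.logb 2 (∑ T ∈ Bᶜ.powerset,
        stepMass G B T * Real.logb 2 (2 * ((B ∪ T).card : ℝ))) := by
    have := jensen_logb Bᶜ.powerset (stepMass G B)
      (fun T => Real.logb 2 (2 * ((B ∪ T).card : ℝ))) hw hw1
      (fun T hT => lt_of_lt_of_le one_pos (hx1 T hT))
    simpa [fB] using this
  -- outer Jensen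
  have jens2 : ∑ T ∈ Bᶜ.powerset, stepMass G B T * Real.logb 2 (2 * ((B ∪ T).card : ℝ))
      ≤ Real.logb 2 (∑ T ∈ Bᶜ.powerset, stepMass G B T * (2 * ((B ∪ T).card : ℝ))) := by
    apply jensen_logb Bᶜ.powerset (stepMass G B)
      (fun T => 2 * ((B ∪ T).card : ℝ)) hw hw1
    intro T hT
    have hpos : 0 < (B ∪ T).card := card_pos.2 (hB.mono (subset_union_left : B ⊆ B ∪ T))
    positivity
  -- expectation of 2|B ∪ T|
  have hexp : ∑ T ∈ Bᶜ.powerset, stepMass G B T * (2 * ((B ∪ T).card : ℝ))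
      = 2 * k + 2 * ∑ v ∈ Bᶜ, forceProb G B v := by
    have hcard : ∀ T ∈ Bᶜ.powerset, ((B ∪ T).card : ℝ) = k + (T.card : ℝ) := by
      intro T hT
      have hdisj : Disjoint B T := by
        have := mem_powerset.1 hT
        exact Finset.disjoint_left.2 fun x hxB hxT => (mem_compl.1 (this hxT)) hxB
      rw [card_union_of_disjoint hdisj]
      push_cast; ring
    calc ∑ T ∈ Bᶜ.powerset, stepMass G B T * (2 * ((B ∪ T).card : ℝ))
        = ∑ T ∈ Bᶜ.powerset, (2 * k * stepMass G B T
            + 2 * (stepMass G B T * (T.card : ℝ))) := by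
          refine Finset.sum_congr rfl fun T hT => ?_
          rw [hcard T hT]; ring
      _ = 2 * k + 2 * ∑ v ∈ Bᶜ, forceProb G B v := by
          rw [Finset.sum_add_distrib, ← Finset.mul_sum, hw1, ← Finset.mul_sum,
            sum_stepMass_card]
          ring
  have hexp2 : ∑ T ∈ Bᶜ.powerset, stepMass G B T * (2 * ((B ∪ T).card : ℝ)) ≤ (2*k)^2 := by
    rw [hexp]
    have := sum_forceProb_le (G := G) hB
    nlinarith [this, hk1]
  -- the expectation of logb values is between 1 and 2 logb 2 (2k)
  have hmid_pos : (1:ℝ) ≤ ∑ T ∈ Bᶜ.powerset,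
      stepMass G B T * Real.logb 2 (2 * ((B ∪ T).card : ℝ)) := by
    calc (1:ℝ) = ∑ T ∈ Bᶜ.powerset, stepMass G B T := hw1.symm
      _ ≤ _ := Finset.sum_le_sum fun T hT => by
          have := hx1 T hT
          nlinarith [hw T hT]
  have hy_pos : (0:ℝ) < ∑ T ∈ Bᶜ.powerset, stepMass G B T * (2 * ((B ∪ T).card : ℝ)) := by
    rw [hexp]
    have h0 : 0 ≤ ∑ v ∈ Bᶜ, forceProb G B v :=
      Finset.sum_nonneg fun v hv => forceProb_nonneg (mem_compl.1 hv)
    nlinarith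
  have hlog2k : (1:ℝ) ≤ Real.logb 2 (2*k) := by
    calc (1:ℝ) = Real.logb 2 2 := (Real.logb_self_eq_one one_lt_two).symm
      _ ≤ _ := (Real.logb_le_logb one_lt_two two_pos (by linarith)).2 (by linarith)
  have final : Real.logb 2 (∑ T ∈ Bᶜ.powerset,
      stepMass G B T * Real.logb 2 (2 * ((B ∪ T).card : ℝ))) ≤
      Real.logb 2 (2 * Real.logb 2 (2*k)) := by
    apply (Real.logb_le_logb one_lt_two (by linarith) (by linarith)).2
    calc _ ≤ Real.logb 2 (∑ T ∈ Bᶜ.powerset, stepMass G B T * (2 * ((B ∪ T).card : ℝ))) :=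
          jens2
      _ ≤ Real.logb 2 ((2*k)^2) :=
          (Real.logb_le_logb one_lt_two hy_pos (by positivity)).2 hexp2
      _ = 2 * Real.logb 2 (2*k) := by
          rw [show ((2:ℝ)*k)^2 = (2*k)^(2:ℕ) by norm_num, Real.logb_pow]
          norm_num
  have hsplit : Real.logb 2 (2 * Real.logb 2 (2*k)) = 1 + fB B := by
    rw [Real.logb_mul two_ne_zero (by linarith), Real.logb_self_eq_one one_lt_two]
    rfl
  calc ∑ T ∈ Bᶜ.powerset, stepMass G B T * fB (B ∪ T)
      ≤ _ := jens1
    _ ≤ Real.logb 2 (2 * Real.logb 2 (2*k)) := final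
    _ = 1 + fB B := hsplit
    _ = fB B + 1 := by ring

variable (G) in
/-- expected value of `fB` of the blue set after `t` steps. -/
noncomputable def expF : ℕ → Finset V → ℝ
  | 0, B => fB B
  | t + 1, B => ∑ T ∈ Bᶜ.powerset, stepMass G B T * expF t (B ∪ T)

lemma expF_univ (t : ℕ) : expF G t (univ : Finset V) = fB (univ : Finset V) := by
  induction t with
  | zero => rfl
  | succ t ih =>
    rw [expF]
    have h : (univ : Finset V)ᶜ = ∅ := by simp
    rw [h, Finset.powerset_empty, Finset.sum_singleton, stepMass_univ_empty,
      Finset.union_empty, ih, one_mul]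

lemma expF_step : ∀ (t : ℕ) (B : Finset V), B.Nonempty →
    expF G (t+1) B ≤ expF G t B + (1 - probAllBlue G t B)
  | 0, B, hB => by
      by_cases h : B = univ
      · subst h
        rw [expF_univ, expF_univ, probAllBlue]
        simp
      · rw [probAllBlue, if_neg h]
        simp only [expF]
        have := key_step (G := G) hB
        linarith
  | (t+1), B, hB => by
      rw [expF, expF, probAllBlue]
      have h1 : ∑ T ∈ Bᶜ.powerset, stepMass G B T * expF G (t+1) (B ∪ T)
          ≤ ∑ T ∈ Bᶜ.powerset, stepMass G B T *
              (expF G t (B ∪ T) + (1 - probAllBlue G t (B ∪ T))) :=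
        Finset.sum_le_sum fun T _ =>
          mul_le_mul_of_nonneg_left
            (expF_step t (B ∪ T) (hB.mono (subset_union_left : B ⊆ B ∪ T)))
            (stepMass_nonneg B T)
      have h2 : ∑ T ∈ Bᶜ.powerset, stepMass G B T *
            (expF G t (B ∪ T) + (1 - probAllBlue G t (B ∪ T)))
          = (∑ T ∈ Bᶜ.powerset, stepMass G B T * expF G t (B ∪ T)) + 1
            - ∑ T ∈ Bᶜ.powerset, stepMass G B T * probAllBlue G t (B ∪ T) := by
        rw [Finset.sum_congr rfl (fun T (hT : T ∈ Bᶜ.powerset) =>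
          show stepMass G B T * (expF G t (B ∪ T) + (1 - probAllBlue G t (B ∪ T)))
            = stepMass G B T * expF G t (B ∪ T) + stepMass G B T
              - stepMass G B T * probAllBlue G t (B ∪ T) by ring)]
        rw [Finset.sum_sub_distrib, Finset.sum_add_distrib, sum_stepMass]
      linarith
  termination_by t => t

lemma expF_ge : ∀ (t : ℕ) (B : Finset V),
    fB (univ : Finset V) * probAllBlue G t B ≤ expF G t B
  | 0, B => by
      rw [probAllBlue, expF]
      split
      · next h => subst h; simp
      · simpa using fB_nonneg B
  | (t+1), B => by
      rw [probAllBlue, expF, Finset.mul_sum]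
      refine Finset.sum_le_sum fun T _ => ?_
      rw [show fB (univ : Finset V) * (stepMass G B T * probAllBlue G t (B ∪ T))
          = stepMass G B T * (fB (univ : Finset V) * probAllBlue G t (B ∪ T)) by ring]
      exact mul_le_mul_of_nonneg_left (expF_ge t (B ∪ T)) (stepMass_nonneg B T)

lemma expF_le {S : Finset V} (hS : S.Nonempty) :
    ∀ t : ℕ, expF G t S ≤ fB S + ∑ s ∈ range t, (1 - probAllBlue G s S)
  | 0 => by rw [expF]; simp
  | (t+1) => by
      calc expF G (t+1) S ≤ expF G t S + (1 - probAllBlue G t S) := expF_step t S hS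
        _ ≤ fB S + ∑ s ∈ range t, (1 - probAllBlue G s S) + (1 - probAllBlue G t S) := by
            linarith [expF_le hS t]
        _ = fB S + ∑ s ∈ range (t+1), (1 - probAllBlue G s S) := by
            rw [Finset.sum_range_succ]; ring

/-- the finset of nonempty proper blue sets. -/
def goodSets (V : Type*) [Fintype V] [DecidableEq V] : Finset (Finset V) :=
  univ.filter (fun B => B.Nonempty ∧ B ≠ univ)

variable (G) in
/-- uniform lower bound on the probability of growing in one step. -/
noncomputable def eps : ℝ :=
  if h : (goodSets V).Nonempty then (goodSets V).inf' h (fun B => 1 - stepMass G B ∅)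
  else 1

lemma stepMass_empty (B : Finset V) :
    stepMass G B ∅ = ∏ v ∈ Bᶜ, (1 - forceProb G B v) := by
  rw [stepMass, if_pos (empty_subset _)]
  exact prod_congr rfl fun v _ => if_neg (notMem_empty v)

lemma crossing (hG : G.Connected) {B : Finset V} (hB : B.Nonempty) (hBu : B ≠ univ) :
    stepMass G B ∅ < 1 := by
  obtain ⟨u, hu⟩ := hB
  obtain ⟨w, hw⟩ : ∃ w, w ∉ B := by
    by_contra h
    push_neg at h
    exact hBu (eq_univ_iff_forall.2 h)
  obtain ⟨d, -, hd1, hd2⟩ :=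
    ((hG.preconnected u w).some).exists_boundary_dart (↑B : Set V)
      (by exact_mod_cast hu) (by exact_mod_cast hw)
  set u₀ := d.toProd.1
  set v₀ := d.toProd.2
  have hadj : G.Adj u₀ v₀ := d.adj
  have hu₀ : u₀ ∈ B := by exact_mod_cast hd1
  have hv₀ : v₀ ∉ B := by exact_mod_cast hd2
  -- forceProb at v₀ is positive
  have hfp : 0 < forceProb G B v₀ := by
    rw [forceProb_eq]
    have hu₀f : u₀ ∈ B.filter (fun u => G.Adj u v₀) := mem_filter.2 ⟨hu₀, hadj⟩
    have hple : ∏ u ∈ B.filter (fun u => G.Adj u v₀), (1 - pr G B u)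
        ≤ 1 - pr G B u₀ := by
      rw [← Finset.mul_prod_erase _ _ hu₀f]
      have hrest : ∏ u ∈ (B.filter (fun u => G.Adj u v₀)).erase u₀, (1 - pr G B u) ≤ 1 :=
        prod_le_one
          (fun u hu' => by
            have := pr_le_one (G := G) (mem_filter.1 (mem_of_mem_erase hu')).2 hv₀
            linarith)
          (fun u hu' => by linarith [pr_nonneg (G := G) (B := B) (u := u)])
      have h1 : 0 ≤ 1 - pr G B u₀ := by linarith [pr_le_one hadj hv₀]
      nlinarith
    have := pr_pos (B := B) hadj
    linarith
  have hv₀c : v₀ ∈ Bᶜ := mem_compl.2 hv₀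
  rw [stepMass_empty]
  have hple : ∏ v ∈ Bᶜ, (1 - forceProb G B v) ≤ 1 - forceProb G B v₀ := by
    rw [← Finset.mul_prod_erase _ _ hv₀c]
    have hrest : ∏ v ∈ Bᶜ.erase v₀, (1 - forceProb G B v) ≤ 1 :=
      prod_le_one
        (fun v hv' => by
          linarith [forceProb_le_one (G := G) (mem_compl.1 (mem_of_mem_erase hv'))])
        (fun v hv' => by
          linarith [forceProb_nonneg (G := G) (mem_compl.1 (mem_of_mem_erase hv'))])
    have h1 : 0 ≤ 1 - forceProb G B v₀ := by linarith [forceProb_le_one (G := G) hv₀]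
    nlinarith
  linarith

lemma eps_le {B : Finset V} (hB : B.Nonempty) (hBu : B ≠ univ) :
    eps G ≤ 1 - stepMass G B ∅ := by
  have hmem : B ∈ goodSets V := mem_filter.2 ⟨mem_univ B, hB, hBu⟩
  rw [eps, dif_pos ⟨B, hmem⟩]
  exact Finset.inf'_le _ hmem

lemma eps_pos (hG : G.Connected) : 0 < eps G := by
  rw [eps]
  split
  · next h =>
    rw [Finset.lt_inf'_iff]
    intro B hB
    rcases mem_filter.1 hB with ⟨-, hne, hnu⟩
    linarith [crossing hG hne hnu]
  · norm_num

lemma eps_le_one : eps G ≤ 1 := by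
  rw [eps]
  split
  · next h =>
    obtain ⟨B, hB⟩ := h
    refine (Finset.inf'_le _ hB).trans ?_
    linarith [stepMass_nonneg (G := G) B ∅]
  · exact le_refl 1

lemma reach (hG : G.Connected) :
    ∀ (n : ℕ) (B : Finset V), B.Nonempty → Bᶜ.card = n →
      eps G ^ n ≤ probAllBlue G n B := by
  intro n
  induction n using Nat.strong_induction_on with
  | _ n ih =>
    intro B hB hc
    match n, hc with
    | 0, hc =>
      have hBu : B = univ := by
        have : Bᶜ = ∅ := card_eq_zero.1 hc
        rwa [compl_eq_empty_iff] at this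
      subst hBu
      rw [pab_univ]
      norm_num
    | (m+1), hc =>
      have hBu : B ≠ univ := by
        intro h; subst h; simp at hc
      have heps0 : 0 ≤ eps G := (eps_pos hG).le
      have heps1 : eps G ≤ 1 := eps_le_one
      rw [probAllBlue]
      -- lower bound each nonempty T term
      have hterm : ∀ T ∈ Bᶜ.powerset,
          stepMass G B T * (if T = ∅ then 0 else eps G ^ m)
            ≤ stepMass G B T * probAllBlue G m (B ∪ T) := by
        intro T hT
        rcases eq_or_ne T ∅ with rfl | hTne
        · rw [if_pos rfl, mul_zero]
          exact mul_nonneg (stepMass_nonneg B ∅) (pab_nonneg m _)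
        · rw [if_neg hTne]
          apply mul_le_mul_of_nonneg_left _ (stepMass_nonneg B T)
          have hTsub := mem_powerset.1 hT
          have hTc : (B ∪ T)ᶜ.card ≤ m := by
            have hcompl : (B ∪ T)ᶜ = Bᶜ \ T := by
              rw [compl_union]
              ext x; simp [mem_inter, mem_sdiff]
            rw [hcompl, card_sdiff_of_subset hTsub, hc]
            have : 1 ≤ T.card := card_pos.2 (nonempty_iff_ne_empty.2 hTne)
            omega
          calc eps G ^ m ≤ eps G ^ ((B ∪ T)ᶜ.card) :=
                pow_le_pow_of_le_one heps0 heps1 hTc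
            _ ≤ probAllBlue G ((B ∪ T)ᶜ.card) (B ∪ T) :=
                ih _ (by omega) _ (hB.mono (subset_union_left : B ⊆ B ∪ T)) rfl
            _ ≤ probAllBlue G m (B ∪ T) := pab_mono hTc _
      refine le_trans ?_ (Finset.sum_le_sum hterm)
      -- compute the lower-bound sum
      have hsum : ∑ T ∈ Bᶜ.powerset, stepMass G B T * (if T = ∅ then 0 else eps G ^ m)
          = eps G ^ m * (1 - stepMass G B ∅) := by
        have hmem : (∅ : Finset V) ∈ Bᶜ.powerset := mem_powerset.2 (empty_subset _)
        rw [← Finset.add_sum_erase _ _ hmem]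
        rw [if_pos rfl, mul_zero, zero_add]
        rw [Finset.sum_congr rfl (fun T hT => by
          rw [if_neg (mem_erase.1 hT).1])]
        rw [← Finset.sum_mul, mul_comm]
        congr 1
        have := Finset.add_sum_erase _ (stepMass G B) hmem
        rw [sum_stepMass] at this
        linarith
      rw [hsum]
      have := eps_le (G := G) hB hBu
      calc eps G ^ (m+1) = eps G ^ m * eps G := by ring
        _ ≤ eps G ^ m * (1 - stepMass G B ∅) :=
            mul_le_mul_of_nonneg_left this (by positivity)

lemma decay (hG : G.Connected) :
    ∀ (t : ℕ) (B : Finset V), B.Nonempty →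
      1 - probAllBlue G (t + Fintype.card V) B
        ≤ (1 - eps G ^ (Fintype.card V)) * (1 - probAllBlue G t B) := by
  intro t
  set N := Fintype.card V with hN
  induction t with
  | zero =>
    intro B hB
    rcases eq_or_ne B univ with rfl | hBu
    · rw [pab_univ, pab_univ]; simp
    · have h0 : probAllBlue G 0 B = 0 := by rw [probAllBlue, if_neg hBu]
      rw [h0]
      have heps0 : 0 ≤ eps G := (eps_pos hG).le
      have heps1 : eps G ≤ 1 := eps_le_one
      have hc : Bᶜ.card ≤ N := by
        rw [hN]
        exact (card_le_univ Bᶜ).trans (le_of_eq (card_univ))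
      have : eps G ^ N ≤ probAllBlue G (0 + N) B := by
        calc eps G ^ N ≤ eps G ^ (Bᶜ.card) := pow_le_pow_of_le_one heps0 heps1 hc
          _ ≤ probAllBlue G (Bᶜ.card) B := reach hG _ B hB rfl
          _ ≤ probAllBlue G (0 + N) B := pab_mono (by omega) B
      have hle := pab_le_one (G := G) (0+N) B
      linarith
  | succ t ih =>
    intro B hB
    have hrw : t + 1 + N = (t + N) + 1 := by omega
    rw [hrw, probAllBlue, probAllBlue]
    have hsum1 := sum_stepMass (G := G) B
    have heps : 0 ≤ 1 - eps G ^ N := by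
      have heps0 : 0 ≤ eps G := (eps_pos hG).le
      have heps1 : eps G ≤ 1 := eps_le_one
      have : eps G ^ N ≤ 1 := pow_le_one₀ heps0 heps1
      linarith
    have hterm : ∀ T ∈ Bᶜ.powerset,
        stepMass G B T * (1 - probAllBlue G (t + N) (B ∪ T))
          ≤ stepMass G B T *
            ((1 - eps G ^ N) * (1 - probAllBlue G t (B ∪ T))) := by
      intro T _
      exact mul_le_mul_of_nonneg_left
        (ih (B ∪ T) (hB.mono (subset_union_left : B ⊆ B ∪ T)))
        (stepMass_nonneg B T)
    have h1 : 1 - ∑ T ∈ Bᶜ.powerset, stepMass G B T * probAllBlue G (t + N) (B ∪ T)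
        = ∑ T ∈ Bᶜ.powerset, stepMass G B T * (1 - probAllBlue G (t + N) (B ∪ T)) := by
      rw [Finset.sum_congr rfl (fun T (_ : T ∈ Bᶜ.powerset) =>
        mul_one_sub (stepMass G B T) (probAllBlue G (t + N) (B ∪ T)))]
      rw [Finset.sum_sub_distrib, hsum1]
    have h2 : ∑ T ∈ Bᶜ.powerset, stepMass G B T *
          ((1 - eps G ^ N) * (1 - probAllBlue G t (B ∪ T)))
        = (1 - eps G ^ N) *
          (1 - ∑ T ∈ Bᶜ.powerset, stepMass G B T * probAllBlue G t (B ∪ T)) := by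
      have hinner : (1:ℝ) - ∑ T ∈ Bᶜ.powerset, stepMass G B T * probAllBlue G t (B ∪ T)
          = ∑ T ∈ Bᶜ.powerset, stepMass G B T * (1 - probAllBlue G t (B ∪ T)) := by
        rw [Finset.sum_congr rfl (fun T (_ : T ∈ Bᶜ.powerset) =>
          mul_one_sub (stepMass G B T) (probAllBlue G t (B ∪ T)))]
        rw [Finset.sum_sub_distrib, hsum1]
      rw [hinner, Finset.mul_sum]
      exact Finset.sum_congr rfl fun T _ => by ring
    rw [h1]
    calc ∑ T ∈ Bᶜ.powerset, stepMass G B T * (1 - probAllBlue G (t + N) (B ∪ T))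
        ≤ ∑ T ∈ Bᶜ.powerset, stepMass G B T *
            ((1 - eps G ^ N) * (1 - probAllBlue G t (B ∪ T))) :=
          Finset.sum_le_sum hterm
      _ = (1 - eps G ^ N) *
            (1 - ∑ T ∈ Bᶜ.powerset, stepMass G B T * probAllBlue G t (B ∪ T)) := h2

lemma q_antitone {S : Finset V} :
    ∀ {s t : ℕ}, s ≤ t → 1 - probAllBlue G t S ≤ 1 - probAllBlue G s S :=
  fun h => by linarith [pab_mono (G := G) h S]

lemma summable_q (hG : G.Connected) {S : Finset V} (hS : S.Nonempty) :
    Summable (fun t => 1 - probAllBlue G t S) := by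
  classical
  set N := Fintype.card V with hN
  have hNpos : 0 < N := by
    rw [hN]; exact Fintype.card_pos_iff.2 hG.nonempty
  set ρ : ℝ := 1 - eps G ^ N with hρ
  have hepsN : 0 < eps G ^ N := pow_pos (eps_pos hG) N
  have hepsN1 : eps G ^ N ≤ 1 := pow_le_one₀ (eps_pos hG).le eps_le_one
  have hρ0 : 0 ≤ ρ := by rw [hρ]; linarith
  have hρ1 : ρ < 1 := by rw [hρ]; linarith
  set q : ℕ → ℝ := fun t => 1 - probAllBlue G t S with hq
  have hq0 : ∀ t, 0 ≤ q t := fun t => by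
    have := pab_le_one (G := G) t S; simp only [hq]; linarith
  have hgeo : ∀ j : ℕ, q (N * j) ≤ ρ ^ j := by
    intro j
    induction j with
    | zero =>
      rw [Nat.mul_zero, pow_zero]
      have := pab_nonneg (G := G) 0 S
      show 1 - probAllBlue G 0 S ≤ 1
      linarith
    | succ j ih =>
      have hstep := decay hG (N * j) S hS
      rw [Nat.mul_succ]
      calc q (N * j + N) ≤ ρ * q (N * j) := hstep
        _ ≤ ρ * ρ ^ j := mul_le_mul_of_nonneg_left ih hρ0
        _ = ρ ^ (j+1) := by ring
  have hblock : ∀ j : ℕ, ∑ t ∈ range (N * j), q t ≤ N * ∑ i ∈ range j, ρ ^ i := by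
    intro j
    induction j with
    | zero => simp
    | succ j ih =>
      have hmul : N * (j+1) = N * j + N := Nat.mul_succ N j
      have hle : N * j ≤ N * j + N := Nat.le_add_right _ _
      have hsplit : ∑ t ∈ range (N * (j+1)), q t
          = ∑ t ∈ range (N * j), q t + ∑ t ∈ Finset.Ico (N * j) (N * j + N), q t := by
        rw [hmul, Finset.range_eq_Ico, ← Finset.sum_Ico_consecutive q (Nat.zero_le _) hle,
          ← Finset.range_eq_Ico]
      have hico : ∑ t ∈ Finset.Ico (N * j) (N * j + N), q t ≤ N * ρ ^ j := by
        calc ∑ t ∈ Finset.Ico (N * j) (N * j + N), q t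
            ≤ ∑ t ∈ Finset.Ico (N * j) (N * j + N), ρ ^ j :=
              Finset.sum_le_sum fun t ht =>
                le_trans (q_antitone (Finset.mem_Ico.1 ht).1) (hgeo j)
          _ = (((N * j + N) - N * j : ℕ) : ℝ) * ρ ^ j := by
              rw [Finset.sum_const, Nat.card_Ico, nsmul_eq_mul]
          _ = N * ρ ^ j := by norm_num
      rw [hsplit, Finset.sum_range_succ, mul_add]
      exact add_le_add ih hico
  have hgeosum : ∀ j : ℕ, ∑ i ∈ range j, ρ ^ i ≤ 1 / (1 - ρ) := by
    intro j
    have hρne : ρ ≠ 1 := ne_of_lt hρ1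
    rw [geom_sum_eq hρne]
    have h1 : (ρ ^ j - 1) / (ρ - 1) = (1 - ρ ^ j) / (1 - ρ) := by
      rw [show ρ ^ j - 1 = -(1 - ρ ^ j) by ring, show ρ - 1 = -(1 - ρ) by ring,
        neg_div_neg_eq]
    rw [h1]
    apply (div_le_div_iff_of_pos_right (by linarith : (0:ℝ) < 1 - ρ)).2
    have : 0 ≤ ρ ^ j := pow_nonneg hρ0 j
    linarith
  apply summable_of_sum_range_le hq0
  intro m
  calc ∑ t ∈ range m, q t ≤ ∑ t ∈ range (N * m), q t := by
        apply Finset.sum_le_sum_of_subset_of_nonneg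
        · exact Finset.range_subset_range.2 (Nat.le_mul_of_pos_left m hNpos)
        · intro t _ _; exact hq0 t
    _ ≤ N * ∑ i ∈ range m, ρ ^ i := hblock m
    _ ≤ N * (1 / (1 - ρ)) :=
        mul_le_mul_of_nonneg_left (hgeosum m) (by positivity)

lemma fB_le_card {S : Finset V} (hS : S.Nonempty) : fB S ≤ (S.card : ℝ) := by
  set k := S.card with hk
  have hk1 : 1 ≤ k := card_pos.2 hS
  -- `2k ≤ 2^(2^k)` in ℕ
  have hnat : 2 * k ≤ 2 ^ (2 ^ k) := by
    have h1 : k < 2 ^ k := Nat.lt_two_pow_self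
    have h2 : 2 ^ (k + 1) ≤ 2 ^ (2 ^ k) :=
      Nat.pow_le_pow_right (by norm_num) (by omega)
    have h3 : 2 * k ≤ 2 ^ (k + 1) := by
      rw [pow_succ, mul_comm]
      exact Nat.mul_le_mul h1.le (le_refl 2)
    omega
  have h2k : (2:ℝ) ≤ 2 * (k:ℝ) := by
    have : (1:ℝ) ≤ (k:ℝ) := by exact_mod_cast hk1
    linarith
  have hx1 : (1:ℝ) ≤ Real.logb 2 (2 * (k:ℝ)) := by
    calc (1:ℝ) = Real.logb 2 2 := (Real.logb_self_eq_one one_lt_two).symm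
      _ ≤ _ := (Real.logb_le_logb one_lt_two two_pos (by linarith)).2 h2k
  have hstep1 : Real.logb 2 (2 * (k:ℝ)) ≤ (2:ℝ) ^ k := by
    have hle : (2:ℝ) * (k:ℝ) ≤ (2:ℝ) ^ (2 ^ k) := by
      exact_mod_cast hnat
    calc Real.logb 2 (2 * (k:ℝ)) ≤ Real.logb 2 ((2:ℝ) ^ (2 ^ k)) :=
          (Real.logb_le_logb one_lt_two (by linarith) (by positivity)).2 hle
      _ = ((2:ℕ) ^ k : ℕ) * Real.logb 2 2 := by
          rw [Real.logb_pow]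
      _ = (2:ℝ) ^ k := by
          rw [Real.logb_self_eq_one one_lt_two]; push_cast; ring
  calc fB S = Real.logb 2 (Real.logb 2 (2 * (k:ℝ))) := rfl
    _ ≤ Real.logb 2 ((2:ℝ) ^ k) :=
        (Real.logb_le_logb one_lt_two (by linarith) (by positivity)).2 hstep1
    _ = (k:ℝ) := by
        rw [show ((2:ℝ) ^ k) = (2:ℝ) ^ (k:ℕ) from rfl, Real.logb_pow,
          Real.logb_self_eq_one one_lt_two, mul_one]

lemma main_bound (hG : G.Connected) {S : Finset V} (hS : S.Nonempty) :
    fB (univ : Finset V) ≤ (S.card : ℝ) + ept G S := by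
  have hsummable := summable_q hG hS
  have hq0 : ∀ t, 0 ≤ 1 - probAllBlue G t S := fun t => by
    linarith [pab_le_one (G := G) t S]
  have hbound : ∀ t : ℕ, fB (univ : Finset V) * probAllBlue G t S ≤ fB S + ept G S := by
    intro t
    have h1 := expF_ge (G := G) t S
    have h2 := expF_le (G := G) hS t
    have h3 : ∑ s ∈ range t, (1 - probAllBlue G s S) ≤ ept G S :=
      Summable.sum_le_tsum (range t) (fun i _ => hq0 i) hsummable
    calc fB (univ : Finset V) * probAllBlue G t S ≤ expF G t S := h1
      _ ≤ fB S + ∑ s ∈ range t, (1 - probAllBlue G s S) := h2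
      _ ≤ fB S + ept G S := by linarith
  have htendP : Filter.Tendsto (fun t => probAllBlue G t S) Filter.atTop (nhds 1) := by
    have h := hsummable.tendsto_atTop_zero
    have h2 : Filter.Tendsto (fun t => 1 - (1 - probAllBlue G t S)) Filter.atTop
        (nhds (1 - 0)) := Filter.Tendsto.sub tendsto_const_nhds h
    simpa using h2
  have htend : Filter.Tendsto (fun t => fB (univ : Finset V) * probAllBlue G t S)
      Filter.atTop (nhds (fB (univ : Finset V))) := by
    have h := htendP.const_mul (fB (univ : Finset V))
    rwa [mul_one] at h
  have hfinal := le_of_tendsto htend (Filter.Eventually.of_forall hbound)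
  have hfS := fB_le_card hS
  linarith

end PZF

/-- Lower bound on the probabilistic zero forcing throttling number
`th(G) = min over nonempty S of (|S| + ept(G,S))`:
for any connected graph `G` on `n` vertices, `th(G) ≥ log₂ log₂ (2n)`. -/
theorem throttling_lower_bound {V : Type*} [Fintype V] [DecidableEq V]
    (G : SimpleGraph V) [DecidableRel G.Adj] (hG : G.Connected) :
    Real.logb 2 (Real.logb 2 (2 * (Fintype.card V : ℝ))) ≤
      ⨅ S : {S : Finset V // S.Nonempty}, ((S.1.card : ℝ) + ept G S.1) := by
  haveI : Nonempty V := hG.nonempty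
  haveI : Nonempty {S : Finset V // S.Nonempty} := ⟨⟨Finset.univ, Finset.univ_nonempty⟩⟩
  have hLHS : Real.logb 2 (Real.logb 2 (2 * (Fintype.card V : ℝ)))
      = PZF.fB (Finset.univ : Finset V) := by
    rw [PZF.fB, Finset.card_univ]
  rw [hLHS]
  exact le_ciInf fun ⟨S, hS⟩ => PZF.main_bound hG hS
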